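/- For every k ≥ 17, the inequality ((2 ln k)/(ln 2))² > 1 holds, and more generally for c = (2/ln 2)(ln k)/k and any rational r slightly greater than c with r < 1/2, one has 2^{c²k} · r^r · (1−r)^{1−r} > 1. -/

import Mathlib

/-- for every integer `k ≥ 17` one has `((2 ln k)/(ln 2))² > 1`, and
with `c = (2/ln 2)(ln k)/k`, for every rational `r` slightly greater than `c` with
`r < 1/2` one has `2^(c²k) · r^r · (1-r)^(1-r) > 1`. -/
theorem stmt_17 (k : ℕ) (hk : 17 ≤ k) :
    (2 * Real.log k / Real.log 2) ^ 2 > 1 ∧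
    ∃ δ : ℝ, 0 < δ ∧ ∀ r : ℚ,
      2 / Real.log 2 * (Real.log k / k) < (r : ℝ) →
      (r : ℝ) < 2 / Real.log 2 * (Real.log k / k) + δ →
      (r : ℝ) < 1 / 2 →
      (2 : ℝ) ^ ((2 / Real.log 2 * (Real.log k / k)) ^ 2 * k) *
        (r : ℝ) ^ (r : ℝ) * (1 - (r : ℝ)) ^ (1 - (r : ℝ)) > 1 := by
  have hl2 : (0:ℝ) < Real.log 2 := Real.log_pos (by norm_num)
  have hl2d : Real.log 2 < 0.6931471808 := Real.log_two_lt_d9.trans_le (by norm_num)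
  have hl2g : (0.6931471803:ℝ) < Real.log 2 := by
    have := Real.log_two_gt_d9; linarith
  have hkR : (17:ℝ) ≤ (k:ℝ) := by exact_mod_cast hk
  have hk0 : (0:ℝ) < (k:ℝ) := by linarith
  have hL16 : 4 * Real.log 2 ≤ Real.log k := by
    have : Real.log 16 ≤ Real.log k := Real.log_le_log (by norm_num) (by linarith)
    have h16 : Real.log 16 = 4 * Real.log 2 := by
      rw [show (16:ℝ) = 2^4 by norm_num, Real.log_pow]; push_cast; ring
    linarith
  have hL : (0:ℝ) < Real.log k := by linarith
  set L := Real.log k with hLdef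
  set l2 := Real.log 2 with hl2def
  constructor
  · have h1 : 1 < 2 * L / l2 := by
      rw [lt_div_iff₀ hl2]; linarith
    nlinarith
  · set c : ℝ := 2 / l2 * (L / k) with hcdef
    have hc0 : 0 < c := by positivity
    refine ⟨c/2, by positivity, ?_⟩
    intro r hr1 hr2 hr3
    have hr0 : (0:ℝ) < (r:ℝ) := lt_trans hc0 hr1
    have hc12 : c < 1/2 := lt_trans hr1 hr3
    have hlc : Real.log c < 0 := Real.log_neg hc0 (by linarith)
    have h1r : (0:ℝ) < 1 - (r:ℝ) := by linarith
    -- c ≥ 8 / k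
    have hc8 : 8 / (k:ℝ) ≤ c := by
      rw [hcdef, div_mul_div_comm, div_le_div_iff₀ hk0 (by positivity)]
      nlinarith
    have hlogc : 3 * l2 - L ≤ Real.log c := by
      have h8k : Real.log (8 / (k:ℝ)) ≤ Real.log c := Real.log_le_log (by positivity) hc8
      have : Real.log (8 / (k:ℝ)) = 3 * l2 - L := by
        rw [Real.log_div (by norm_num) (ne_of_gt hk0),
          show (8:ℝ) = 2^3 by norm_num, Real.log_pow]
        push_cast; ring
      linarith
    -- algebraic identity
    have hiden : c^2 * (k:ℝ) * l2 = 2 * c * L := by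
      rw [hcdef]; field_simp
    -- r * log r > (3c/2) * log c
    have hlr : Real.log c < Real.log (r:ℝ) := Real.log_lt_log hc0 hr1
    have hb1 : (3*c/2) * Real.log c < (r:ℝ) * Real.log (r:ℝ) := by
      have h1 : (r:ℝ) * Real.log c < (r:ℝ) * Real.log (r:ℝ) :=
        (mul_lt_mul_iff_right₀ hr0).mpr hlr
      have h2 : (3*c/2) * Real.log c < (r:ℝ) * Real.log c := by
        have : (r:ℝ) < 3*c/2 := by linarith
        nlinarith
      linarith
    -- (1-r) * log (1-r) ≥ -r
    have hb2 : -(r:ℝ) ≤ (1 - (r:ℝ)) * Real.log (1 - (r:ℝ)) := by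
      have h := Real.log_le_sub_one_of_pos (x := (1 - (r:ℝ))⁻¹) (by positivity)
      rw [Real.log_inv] at h
      have h' : -((1 - (r:ℝ))⁻¹ - 1) ≤ Real.log (1 - (r:ℝ)) := by linarith
      have hinv : (1 - (r:ℝ))⁻¹ - 1 = (r:ℝ) / (1 - (r:ℝ)) := by
        field_simp; ring
      rw [hinv] at h'
      have := mul_le_mul_of_nonneg_left h' (le_of_lt h1r)
      calc -(r:ℝ) = (1 - (r:ℝ)) * -((r:ℝ) / (1 - (r:ℝ))) := by
            field_simp
        _ ≤ (1 - (r:ℝ)) * Real.log (1 - (r:ℝ)) := this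
    -- sum is positive
    have hsum : 0 < c^2 * (k:ℝ) * l2 + (r:ℝ) * Real.log (r:ℝ)
        + (1 - (r:ℝ)) * Real.log (1 - (r:ℝ)) := by
      have key : 0 < 2 * c * L + (3*c/2) * Real.log c - (3*c/2) := by
        have h1 : L + 9 * l2 - 3 > 0 := by linarith
        nlinarith [mul_pos hc0 h1]
      have hrc : -(r:ℝ) > -(3*c/2) := by linarith
      linarith [hiden, hb1, hb2]
    -- convert to the product form
    have e1 : (2:ℝ) ^ (c^2 * (k:ℝ)) = Real.exp (c^2 * (k:ℝ) * l2) := by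
      rw [Real.rpow_def_of_pos (by norm_num : (0:ℝ) < 2)]
      exact congrArg Real.exp (mul_comm _ _)
    have e2 : (r:ℝ) ^ (r:ℝ) = Real.exp ((r:ℝ) * Real.log (r:ℝ)) := by
      rw [Real.rpow_def_of_pos hr0]; exact congrArg Real.exp (mul_comm _ _)
    have e3 : (1 - (r:ℝ)) ^ (1 - (r:ℝ))
        = Real.exp ((1 - (r:ℝ)) * Real.log (1 - (r:ℝ))) := by
      rw [Real.rpow_def_of_pos h1r]; exact congrArg Real.exp (mul_comm _ _)
    rw [e1, e2, e3, ← Real.exp_add, ← Real.exp_add]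
    calc (1:ℝ) = Real.exp 0 := Real.exp_zero.symm
      _ < _ := Real.exp_lt_exp.mpr (by linarith)
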